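/- Let p be an odd prime and let a_1, ..., a_{p+1} be nonzero elements of F_p. Define Q in F_p[x_1, ..., x_{p+1}] by Q(x_1, ..., x_{p+1}) = (a_1 x_1 + a_2 x_2 + ... + a_p x_p)^{p-1} · (a_1 x_1 + 2 a_2 x_2 + ... + p a_p x_p + a_{p+1} x_{p+1})^{p-1}. Then the alternating sum over all (x_1, ..., x_{p+1}) in {0,1}^{p+1} of (-1)^{x_1 + ... + x_{p+1}} · Q(x_1, ..., x_{p+1}) equals 0 in F_p. -/

import Mathlib

open MvPolynomial

section Aux

variable {R : Type*} [CommRing R] {n : ℕ}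

/-- The sign `(-1)^{#true coordinates}` as a product over coordinates. -/
lemma altQ_sgn_eq_prod (ε : Fin n → Bool) :
    (-1 : R) ^ (Finset.univ.filter fun j => ε j).card =
      ∏ j : Fin n, (if ε j then (-1 : R) else 1) := by
  rw [← Finset.prod_const, Finset.prod_filter]

lemma altQ_sgn_update (ε : Fin n → Bool) (k : Fin n) :
    (-1 : R) ^ (Finset.univ.filter fun j => (Function.update ε k (!ε k)) j).card =
      -(-1 : R) ^ (Finset.univ.filter fun j => ε j).card := by
  rw [altQ_sgn_eq_prod, altQ_sgn_eq_prod]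
  have hfun : (fun j => if (Function.update ε k (!ε k)) j then (-1 : R) else 1) =
      Function.update (fun j => if ε j then (-1 : R) else 1) k
        (-(if ε k then (-1 : R) else 1)) := by
    funext j
    by_cases h : j = k
    · subst h; cases hε : ε j <;> simp [hε]
    · simp [Function.update_of_ne h]
  rw [hfun, Finset.prod_update_of_mem (Finset.mem_univ k),
    ← Finset.prod_erase_mul Finset.univ _ (Finset.mem_univ k)]
  have : Finset.univ \ {k} = Finset.univ.erase k := by
    ext x; simp [Finset.mem_erase, And.comm]
  rw [this]
  ring

/-- Alternating sums over the cube of a function not depending on coordinate `k` vanish. -/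
lemma altQ_sum_flip (k : Fin n) (g : (Fin n → Bool) → R)
    (hg : ∀ ε b, g (Function.update ε k b) = g ε) :
    ∑ ε : Fin n → Bool,
      (-1 : R) ^ (Finset.univ.filter fun j => ε j).card * g ε = 0 := by
  apply Finset.sum_ninvolution (fun ε => Function.update ε k (!ε k))
  · intro ε
    rw [altQ_sgn_update, hg]
    ring
  · intro ε _
    intro h
    have := congrFun h k
    simp at this
  · intro ε; exact Finset.mem_univ _
  · intro ε
    have h1 : (Function.update ε k (!ε k)) k = !ε k := Function.update_self _ _ _
    rw [h1, Function.update_idem, Bool.not_not, Function.update_eq_self]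

/-- A linear form whose `k`-th coefficient vanishes does not depend on coordinate `k`. -/
lemma altQ_lin_update (w : Fin n → R) (k : Fin n) (hw : w k = 0) (ε : Fin n → Bool) (b : Bool) :
    ∑ i, w i * (if (Function.update ε k b) i then (1 : R) else 0) =
      ∑ i, w i * (if ε i then (1 : R) else 0) := by
  apply Finset.sum_congr rfl
  intro i _
  by_cases h : i = k
  · subst h; simp [hw]
  · simp [Function.update_of_ne h]

end Aux

theorem alternating_sum_Q_eq_zero (p : ℕ) (hp : p.Prime) (hodd : Odd p)
    (a : Fin (p + 1) → ZMod p) (ha : ∀ i, a i ≠ 0)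
    (Q : MvPolynomial (Fin (p + 1)) (ZMod p))
    (hQ : Q =
      (∑ i ∈ Finset.univ.filter (fun i : Fin (p + 1) => (i : ℕ) < p), C (a i) * X i) ^ (p - 1) *
      (∑ i : Fin (p + 1), C ((((i : ℕ) + 1 : ℕ) : ZMod p) * a i) * X i) ^ (p - 1)) :
    ∑ ε : Fin (p + 1) → Bool,
      (-1 : ZMod p) ^ (Finset.univ.filter fun j => ε j).card *
        MvPolynomial.eval (fun i => if ε i then (1 : ZMod p) else 0) Q = 0 := by
  haveI : Fact p.Prime := ⟨hp⟩
  haveI : NeZero p := ⟨hp.ne_zero⟩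
  have hp2 : 2 ≤ p := hp.two_le
  -- coefficient vectors
  set w1 : Fin (p + 1) → ZMod p := fun i => if (i : ℕ) < p then a i else 0 with hw1
  set w2 : Fin (p + 1) → ZMod p := fun i => (((i : ℕ) + 1 : ℕ) : ZMod p) * a i with hw2
  set φ : (Fin (p + 1) → Bool) → Fin (p + 1) → ZMod p :=
    fun ε i => if ε i then (1 : ZMod p) else 0 with hφ
  set f1 : (Fin (p + 1) → Bool) → ZMod p := fun ε => ∑ i, w1 i * φ ε i with hf1
  set f2 : (Fin (p + 1) → Bool) → ZMod p := fun ε => ∑ i, w2 i * φ ε i with hf2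
  -- evaluation of Q
  have heval : ∀ ε : Fin (p + 1) → Bool,
      MvPolynomial.eval (φ ε) Q = (f1 ε) ^ (p - 1) * (f2 ε) ^ (p - 1) := by
    intro ε
    rw [hQ]
    simp only [map_mul, map_pow, map_sum, eval_mul, eval_C, eval_X]
    congr 2
    · rw [hf1, Finset.sum_filter]
      apply Finset.sum_congr rfl
      intro i _
      by_cases h : (i : ℕ) < p <;> simp [hw1, h, hφ]
  -- `x^(p-1)` is the indicator of `x ≠ 0`
  have hind : ∀ x : ZMod p, x ^ (p - 1) = if x = 0 then 0 else 1 := by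
    intro x
    by_cases h : x = 0
    · rw [h, if_pos rfl]
      exact zero_pow (Nat.sub_ne_zero_of_lt hp.one_lt)
    · simp [h, ZMod.pow_card_sub_one_eq_one h]
  -- the integer-valued double-zero alternating count
  -- key coordinates
  have hplt : p < p + 1 := Nat.lt_succ_self p
  set kp : Fin (p + 1) := ⟨p, hplt⟩ with hkp
  -- f1 does not depend on coordinate kp
  have hw1p : w1 kp = 0 := by simp [hw1, hkp]
  have hf1up : ∀ ε b, f1 (Function.update ε kp b) = f1 ε := by
    intro ε b
    exact altQ_lin_update w1 kp hw1p ε b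
  -- the pencil: for j < p, the form f2 + j * f1 does not depend on coordinate p-1-j
  have hpencil : ∀ j < p, ∃ k : Fin (p + 1),
      ∀ ε b, f2 (Function.update ε k b) + (j : ZMod p) * f1 (Function.update ε k b) =
        f2 ε + (j : ZMod p) * f1 ε := by
    intro j hj
    refine ⟨⟨p - 1 - j, Nat.lt_succ_of_le ((Nat.sub_le _ _).trans (Nat.sub_le _ _))⟩, ?_⟩
    have hcomb : ∀ ε : Fin (p + 1) → Bool,
        f2 ε + (j : ZMod p) * f1 ε = ∑ i, (w2 i + (j : ZMod p) * w1 i) * φ ε i := by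
      intro ε
      rw [hf1, hf2, Finset.mul_sum, ← Finset.sum_add_distrib]
      apply Finset.sum_congr rfl
      intro i _
      ring
    intro ε b
    rw [hcomb, hcomb]
    apply altQ_lin_update
    show w2 _ + (j : ZMod p) * w1 _ = 0
    have hlt : p - 1 - j < p := (Nat.sub_le (p - 1) j).trans_lt (Nat.sub_lt hp.pos one_pos)
    rw [hw1, hw2]
    simp only [hlt, if_true]
    show ((p - 1 - j) + 1 : ℕ) * a _ + (j : ZMod p) * a _ = 0
    have h2 : (p - 1 - j) + 1 = p - j := by
      have h0 : 1 ≤ p - j := by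
        clear hcomb
        omega
      rw [Nat.sub_sub, Nat.add_comm 1 j, ← Nat.sub_sub]
      exact Nat.sub_add_cancel h0
    rw [h2]
    have h3 : ((p - j : ℕ) : ZMod p) + (j : ZMod p) = 0 := by
      rw [← Nat.cast_add, Nat.sub_add_cancel (le_of_lt hj)]
      simp
    calc ((p - j : ℕ) : ZMod p) * a _ + (j : ZMod p) * a _
        = (((p - j : ℕ) : ZMod p) + (j : ZMod p)) * a _ := by ring
      _ = 0 := by rw [h3, zero_mul]
  -- counting lemma: for each ε, the pencil vanishing count is 1 + p·[f1=0][f2=0]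
  have hcount : ∀ ε : Fin (p + 1) → Bool,
      (∑ j ∈ Finset.range p, (if f2 ε + (j : ZMod p) * f1 ε = 0 then (1 : ℤ) else 0)) +
        (if f1 ε = 0 then (1 : ℤ) else 0) =
      1 + (p : ℤ) * ((if f1 ε = 0 then (1 : ℤ) else 0) * (if f2 ε = 0 then (1 : ℤ) else 0)) := by
    intro ε
    by_cases h1 : f1 ε = 0
    · by_cases h2 : f2 ε = 0 <;> simp [h1, h2, Finset.sum_ite_eq] <;> ring
    · simp only [h1, if_false, mul_zero, zero_mul, add_zero, mul_zero]
      have hu : ∀ j ∈ Finset.range p,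
          (f2 ε + (j : ZMod p) * f1 ε = 0) ↔ j = (-(f2 ε) / f1 ε).val := by
        intro j hj
        rw [Finset.mem_range] at hj
        constructor
        · intro h
          have : (j : ZMod p) = -(f2 ε) / f1 ε := by
            field_simp
            linear_combination h
          rw [← this, ZMod.val_cast_of_lt hj]
        · intro h
          subst h
          rw [ZMod.natCast_val, ZMod.cast_id]
          field_simp
          ring
      rw [Finset.sum_congr rfl (fun j hj => by rw [if_congr (hu j hj) rfl rfl])]
      rw [Finset.sum_ite_eq' (Finset.range p) _ (fun _ => (1 : ℤ))]
      simp [ZMod.val_lt]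
  -- summing the counting identity against the sign, all pencil terms vanish
  have hDzero : (∑ ε : Fin (p + 1) → Bool,
      (-1 : ℤ) ^ (Finset.univ.filter fun j => ε j).card *
        ((if f1 ε = 0 then (1 : ℤ) else 0) * (if f2 ε = 0 then (1 : ℤ) else 0))) = 0 := by
    have hLHS : ∑ ε : Fin (p + 1) → Bool,
        (-1 : ℤ) ^ (Finset.univ.filter fun j => ε j).card *
          ((∑ j ∈ Finset.range p, (if f2 ε + (j : ZMod p) * f1 ε = 0 then (1 : ℤ) else 0)) +
            (if f1 ε = 0 then (1 : ℤ) else 0)) = 0 := by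
      have hsplit : ∀ ε : Fin (p + 1) → Bool,
          (-1 : ℤ) ^ (Finset.univ.filter fun j => ε j).card *
            ((∑ j ∈ Finset.range p, (if f2 ε + (j : ZMod p) * f1 ε = 0 then (1 : ℤ) else 0)) +
              (if f1 ε = 0 then (1 : ℤ) else 0)) =
          (∑ j ∈ Finset.range p, (-1 : ℤ) ^ (Finset.univ.filter fun j => ε j).card *
              (if f2 ε + (j : ZMod p) * f1 ε = 0 then (1 : ℤ) else 0)) +
            (-1 : ℤ) ^ (Finset.univ.filter fun j => ε j).card *
              (if f1 ε = 0 then (1 : ℤ) else 0) := by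
        intro ε
        rw [mul_add, Finset.mul_sum]
      rw [Finset.sum_congr rfl (fun ε _ => hsplit ε), Finset.sum_add_distrib]
      rw [Finset.sum_comm]
      have hz1 : ∀ j ∈ Finset.range p,
          ∑ ε : Fin (p + 1) → Bool,
            (-1 : ℤ) ^ (Finset.univ.filter fun j => ε j).card *
              (if f2 ε + (j : ZMod p) * f1 ε = 0 then (1 : ℤ) else 0) = 0 := by
        intro j hj
        rw [Finset.mem_range] at hj
        obtain ⟨k, hk⟩ := hpencil j hj
        apply altQ_sum_flip k
        intro ε b
        rw [hk ε b]
      rw [Finset.sum_congr rfl hz1, Finset.sum_const, smul_zero, zero_add]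
      apply altQ_sum_flip kp
      intro ε b
      rw [hf1up ε b]
    rw [Finset.sum_congr rfl (fun ε _ => by rw [hcount ε])] at hLHS
    have hsplit2 : ∀ ε : Fin (p + 1) → Bool,
        (-1 : ℤ) ^ (Finset.univ.filter fun j => ε j).card *
          (1 + (p : ℤ) * ((if f1 ε = 0 then (1 : ℤ) else 0) * (if f2 ε = 0 then (1 : ℤ) else 0))) =
        (-1 : ℤ) ^ (Finset.univ.filter fun j => ε j).card * 1 +
          (p : ℤ) * ((-1 : ℤ) ^ (Finset.univ.filter fun j => ε j).card *
            ((if f1 ε = 0 then (1 : ℤ) else 0) * (if f2 ε = 0 then (1 : ℤ) else 0))) := by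
      intro ε; ring
    rw [Finset.sum_congr rfl (fun ε _ => hsplit2 ε), Finset.sum_add_distrib,
      ← Finset.mul_sum] at hLHS
    have hone : ∑ ε : Fin (p + 1) → Bool,
        (-1 : ℤ) ^ (Finset.univ.filter fun j => ε j).card * 1 = 0 := by
      apply altQ_sum_flip (⟨0, p.succ_pos⟩ : Fin (p + 1))
      intro ε b; rfl
    rw [hone, zero_add] at hLHS
    have hpne : (p : ℤ) ≠ 0 := by exact_mod_cast hp.ne_zero
    exact (mul_eq_zero.mp hLHS).resolve_left hpne
  -- now work in ZMod p
  calc ∑ ε : Fin (p + 1) → Bool,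
        (-1 : ZMod p) ^ (Finset.univ.filter fun j => ε j).card *
          MvPolynomial.eval (fun i => if ε i then (1 : ZMod p) else 0) Q
      = ∑ ε : Fin (p + 1) → Bool,
        (-1 : ZMod p) ^ (Finset.univ.filter fun j => ε j).card *
          ((1 - (if f1 ε = 0 then (1 : ZMod p) else 0)) *
            (1 - (if f2 ε = 0 then (1 : ZMod p) else 0))) := by
        apply Finset.sum_congr rfl
        intro ε _
        have : MvPolynomial.eval (fun i => if ε i then (1 : ZMod p) else 0) Q =
            MvPolynomial.eval (φ ε) Q := rfl
        rw [this, heval ε, hind, hind]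
        congr 1
        by_cases h1 : f1 ε = 0 <;> by_cases h2 : f2 ε = 0 <;> simp [h1, h2]
    _ = 0 := by
        have hexp : ∀ ε : Fin (p + 1) → Bool,
            (-1 : ZMod p) ^ (Finset.univ.filter fun j => ε j).card *
              ((1 - (if f1 ε = 0 then (1 : ZMod p) else 0)) *
                (1 - (if f2 ε = 0 then (1 : ZMod p) else 0))) =
            (-1 : ZMod p) ^ (Finset.univ.filter fun j => ε j).card * 1 -
              (-1 : ZMod p) ^ (Finset.univ.filter fun j => ε j).card *
                (if f1 ε = 0 then (1 : ZMod p) else 0) -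
              (-1 : ZMod p) ^ (Finset.univ.filter fun j => ε j).card *
                (if f2 ε = 0 then (1 : ZMod p) else 0) +
              (-1 : ZMod p) ^ (Finset.univ.filter fun j => ε j).card *
                ((if f1 ε = 0 then (1 : ZMod p) else 0) *
                  (if f2 ε = 0 then (1 : ZMod p) else 0)) := by
          intro ε; ring
        rw [Finset.sum_congr rfl (fun ε _ => hexp ε)]
        rw [Finset.sum_add_distrib, Finset.sum_sub_distrib, Finset.sum_sub_distrib]
        have hz0 : ∑ ε : Fin (p + 1) → Bool,
            (-1 : ZMod p) ^ (Finset.univ.filter fun j => ε j).card * 1 = 0 := by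
          apply altQ_sum_flip (⟨0, p.succ_pos⟩ : Fin (p + 1))
          intro ε b; rfl
        have hz1 : ∑ ε : Fin (p + 1) → Bool,
            (-1 : ZMod p) ^ (Finset.univ.filter fun j => ε j).card *
              (if f1 ε = 0 then (1 : ZMod p) else 0) = 0 := by
          apply altQ_sum_flip kp
          intro ε b
          rw [hf1up ε b]
        have hz2 : ∑ ε : Fin (p + 1) → Bool,
            (-1 : ZMod p) ^ (Finset.univ.filter fun j => ε j).card *
              (if f2 ε = 0 then (1 : ZMod p) else 0) = 0 := by
          have hw2z : w2 ⟨p - 1, Nat.lt_succ_of_le (Nat.sub_le p 1)⟩ = 0 := by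
            rw [hw2]
            show (((p - 1) + 1 : ℕ) : ZMod p) * a _ = 0
            have h2 : (p - 1) + 1 = p := Nat.succ_pred_eq_of_pos hp.pos
            rw [h2, ZMod.natCast_self, zero_mul]
          apply altQ_sum_flip (⟨p - 1, Nat.lt_succ_of_le (Nat.sub_le p 1)⟩ : Fin (p + 1))
          intro ε b
          have : f2 (Function.update ε ⟨p - 1, Nat.lt_succ_of_le (Nat.sub_le p 1)⟩ b) = f2 ε :=
            altQ_lin_update w2 _ hw2z ε b
          rw [this]
        have hz3 : ∑ ε : Fin (p + 1) → Bool,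
            (-1 : ZMod p) ^ (Finset.univ.filter fun j => ε j).card *
              ((if f1 ε = 0 then (1 : ZMod p) else 0) *
                (if f2 ε = 0 then (1 : ZMod p) else 0)) = 0 := by
          have hc : ((∑ ε : Fin (p + 1) → Bool,
              (-1 : ℤ) ^ (Finset.univ.filter fun j => ε j).card *
                ((if f1 ε = 0 then (1 : ℤ) else 0) *
                  (if f2 ε = 0 then (1 : ℤ) else 0)) : ℤ) : ZMod p) = ∑ ε : Fin (p + 1) → Bool,
              (-1 : ZMod p) ^ (Finset.univ.filter fun j => ε j).card *
                ((if f1 ε = 0 then (1 : ZMod p) else 0) *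
                  (if f2 ε = 0 then (1 : ZMod p) else 0)) := by
            push_cast [apply_ite (fun z : ℤ => (z : ZMod p))]
            rfl
          rw [← hc, hDzero, Int.cast_zero]
        rw [hz0, hz1, hz2, hz3]
        ring
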